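/- For 1 < p < ∞, ∫₀^{π_{2,p'}/2} (sin_{2,p'}(x))^{p'} dx = (1/p')·B(1/2, (p'+1)/p'), where B is the Beta function. -/

import Mathlib

open Set MeasureTheory intervalIntegral

/-- Euler Beta function B(a,b) = ∫₀¹ x^{a-1}(1-x)^{b-1} dx. -/
noncomputable def betaFn (a b : ℝ) : ℝ := ∫ x in (0:ℝ)..1, x ^ (a - 1) * (1 - x) ^ (b - 1)

section Aux

variable {q : ℝ} (hq : 1 < q)

/-- the dominating function -/
lemma aux_dom_ii : IntervalIntegrable (fun t : ℝ => (1 - t) ^ (-(1/2 : ℝ))) volume 0 1 := by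
  have h : IntervalIntegrable (fun t : ℝ => t ^ (-(1/2 : ℝ))) volume 0 1 :=
    intervalIntegral.intervalIntegrable_rpow' (by norm_num)
  simpa using (h.comp_sub_left 1).symm

include hq in
lemma aux_base_nonneg : ∀ t ∈ Icc (0:ℝ) 1, 0 ≤ 1 - t ^ q := by
  intro t ht
  have : t ^ q ≤ 1 := Real.rpow_le_one ht.1 ht.2 (by linarith)
  linarith

include hq in
lemma aux_w_nonneg : ∀ t ∈ Icc (0:ℝ) 1, 0 ≤ (1 - t ^ q) ^ (-(1/2 : ℝ)) := fun t ht =>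
  Real.rpow_nonneg (aux_base_nonneg hq t ht) _

include hq in
lemma aux_w_le : ∀ t ∈ Icc (0:ℝ) 1,
    (1 - t ^ q) ^ (-(1/2 : ℝ)) ≤ (1 - t) ^ (-(1/2 : ℝ)) := by
  intro t ht
  rcases eq_or_lt_of_le ht.2 with h1 | h1
  · subst h1
    simp [Real.one_rpow]
  · have h2 : t ^ q ≤ t := by
      rcases eq_or_lt_of_le ht.1 with h0 | h0
      · rw [← h0, Real.zero_rpow (by positivity : q ≠ 0)]
      · calc t ^ q ≤ t ^ (1:ℝ) :=
              Real.rpow_le_rpow_of_exponent_ge h0 h1.le (by linarith)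
          _ = t := Real.rpow_one t
    exact Real.rpow_le_rpow_of_nonpos (by linarith) (by linarith) (by norm_num)

include hq in
lemma aux_w_ii : IntervalIntegrable (fun t : ℝ => (1 - t ^ q) ^ (-(1/2 : ℝ))) volume 0 1 := by
  apply (aux_dom_ii).mono_fun'
  · exact (by fun_prop : Measurable fun t : ℝ => (1 - t ^ q) ^ (-(1/2 : ℝ))).aestronglyMeasurable
  · rw [uIoc_of_le (by norm_num : (0:ℝ) ≤ 1)]
    refine (ae_restrict_iff' measurableSet_Ioc).mpr (ae_of_all _ fun t ht => ?_)
    have ht' : t ∈ Icc (0:ℝ) 1 := ⟨ht.1.le, ht.2⟩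
    dsimp only
    rw [Real.norm_eq_abs, abs_of_nonneg (aux_w_nonneg hq t ht')]
    exact aux_w_le hq t ht'

include hq in
lemma aux_w_pos : ∀ t ∈ Ico (0:ℝ) 1, 0 < (1 - t ^ q) ^ (-(1/2 : ℝ)) := by
  intro t ht
  have : t ^ q < 1 := by
    rcases eq_or_lt_of_le ht.1 with h0 | h0
    · rw [← h0, Real.zero_rpow (by positivity : q ≠ 0)]; norm_num
    · exact Real.rpow_lt_one ht.1 ht.2 (by linarith)
  exact Real.rpow_pos_of_pos (by linarith) _

end Aux

/-- ∫₀^{π_{2,p'}/2} (sin_{2,p'} x)^{p'} dx = (1/p')·B(1/2, (p'+1)/p'). -/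
theorem stmt14 (p : ℝ) (hp : 1 < p) (sn : ℝ → ℝ) (π₀ : ℝ)
    (hπ : π₀ = 2 * ∫ t in (0:ℝ)..1, (1 - t ^ (p / (p - 1))) ^ (-(1/2 : ℝ)))
    (hinv : ∀ y ∈ Set.Icc (0:ℝ) 1,
      sn (∫ t in (0:ℝ)..y, (1 - t ^ (p / (p - 1))) ^ (-(1/2 : ℝ))) = y) :
    ∫ x in (0:ℝ)..(π₀ / 2), sn x ^ (p / (p - 1)) =
      (1 / (p / (p - 1))) * betaFn (1/2) ((p / (p - 1) + 1) / (p / (p - 1))) := by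
  have hp0 : (0:ℝ) < p - 1 := by linarith
  set q : ℝ := p / (p - 1) with hqdef
  have hq : 1 < q := (one_lt_div hp0).mpr (by linarith)
  have hq0 : (0:ℝ) < q := lt_trans one_pos hq
  set w : ℝ → ℝ := fun t => (1 - t ^ q) ^ (-(1/2 : ℝ)) with hwdef
  set F : ℝ → ℝ := fun y => ∫ t in (0:ℝ)..y, w t with hFdef
  have hwmeas : Measurable w := by rw [hwdef]; fun_prop
  have hwii : IntervalIntegrable w volume 0 1 := aux_w_ii hq
  have hwii' : ∀ y₁ ∈ Icc (0:ℝ) 1, ∀ y₂ ∈ Icc (0:ℝ) 1,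
      IntervalIntegrable w volume y₁ y₂ := by
    intro y₁ h₁ y₂ h₂
    apply hwii.mono_set
    rw [uIcc_of_le (by norm_num : (0:ℝ) ≤ 1)]
    exact uIcc_subset_Icc h₁ h₂
  have hF0 : F 0 = 0 := integral_same
  have hF1 : F 1 = π₀ / 2 := by rw [hπ]; ring
  -- strict monotonicity of F on [0,1]
  have hFmono : StrictMonoOn F (Icc 0 1) := by
    intro y₁ h₁ y₂ h₂ h12
    have hii : IntervalIntegrable w volume y₁ y₂ := hwii' y₁ h₁ y₂ h₂
    have hsum : F y₁ + ∫ t in y₁..y₂, w t = F y₂ :=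
      integral_add_adjacent_intervals (hwii' 0 (by norm_num) y₁ h₁) hii
    have hpos : 0 < ∫ t in y₁..y₂, w t := by
      apply intervalIntegral.intervalIntegral_pos_of_pos_on hii _ h12
      intro x hx
      exact aux_w_pos hq x ⟨h₁.1.trans hx.1.le, lt_of_lt_of_le hx.2 h₂.2⟩
    linarith
  have hFcont : ContinuousOn F (Icc 0 1) := by
    have := intervalIntegral.continuousOn_primitive_interval
      (f := w) (a := 0) (b := 1) (μ := volume) ?_
    · rwa [uIcc_of_le (by norm_num : (0:ℝ) ≤ 1)] at this
    · rw [uIcc_of_le (by norm_num : (0:ℝ) ≤ 1)]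
      exact (intervalIntegrable_iff_integrableOn_Icc_of_le (by norm_num)).mp hwii
  have hπpos : 0 < π₀ / 2 := by
    rw [← hF1, ← hF0]; exact hFmono ⟨le_rfl, by norm_num⟩ ⟨by norm_num, le_rfl⟩ one_pos
  -- image facts
  have hFmap : ∀ y ∈ Icc (0:ℝ) 1, F y ∈ Icc 0 (π₀/2) := by
    intro y hy
    constructor
    · rw [← hF0]; rcases eq_or_lt_of_le hy.1 with h | h
      · rw [h]
      · exact (hFmono ⟨le_rfl, by norm_num⟩ hy h).le
    · rw [← hF1]; rcases eq_or_lt_of_le hy.2 with h | h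
      · rw [h]
      · exact (hFmono hy ⟨by norm_num, le_rfl⟩ h).le
  have hFsurj : SurjOn F (Icc 0 1) (Icc 0 (π₀/2)) := by
    have := hFcont.surjOn_Icc (a := 0) (b := 1)
      (left_mem_Icc.mpr (by norm_num)) (right_mem_Icc.mpr (by norm_num))
    rwa [hF0, hF1] at this
  have himageIcc : F '' Icc 0 1 = Icc 0 (π₀/2) :=
    Subset.antisymm (image_subset_iff.mpr hFmap) hFsurj
  have himageIoo : F '' Ioo 0 1 = Ioo 0 (π₀/2) := by
    apply Subset.antisymm
    · rintro _ ⟨y, hy, rfl⟩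
      exact ⟨by rw [← hF0]; exact hFmono ⟨le_rfl, by norm_num⟩ ⟨hy.1.le, hy.2.le⟩ hy.1,
        by rw [← hF1]; exact hFmono ⟨hy.1.le, hy.2.le⟩ ⟨by norm_num, le_rfl⟩ hy.2⟩
    · rintro u hu
      obtain ⟨y, hy, rfl⟩ := hFsurj ⟨hu.1.le, hu.2.le⟩
      refine ⟨y, ⟨?_, ?_⟩, rfl⟩
      · rcases eq_or_lt_of_le hy.1 with h | h
        · exfalso; rw [← h, hF0] at hu; exact lt_irrefl _ hu.1
        · exact h
      · rcases eq_or_lt_of_le hy.2 with h | h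
        · exfalso; rw [h, hF1] at hu; exact lt_irrefl _ hu.2
        · exact h
  have hsnF : ∀ y ∈ Icc (0:ℝ) 1, sn (F y) = y := hinv
  -- sn is strictly monotone on [0, π₀/2]
  have hsnmono : StrictMonoOn sn (Icc 0 (π₀/2)) := by
    intro u₁ hu₁ u₂ hu₂ h12
    obtain ⟨y₁, hy₁, rfl⟩ := hFsurj hu₁
    obtain ⟨y₂, hy₂, rfl⟩ := hFsurj hu₂
    rw [hsnF y₁ hy₁, hsnF y₂ hy₂]
    by_contra h
    push_neg at h
    rcases eq_or_lt_of_le h with h' | h'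
    · rw [h'] at h12; exact lt_irrefl _ h12
    · exact absurd h12 (not_lt.mpr (hFmono hy₂ hy₁ h').le)
  have hsnimage : sn '' Icc 0 (π₀/2) = Icc 0 1 := by
    rw [← himageIcc, image_image]
    rw [show (fun y => sn (F y)) '' Icc 0 1 = id '' Icc 0 1 from
      image_congr fun y hy => hsnF y hy]
    simp
  have hsnmem : ∀ u ∈ Icc 0 (π₀/2), sn u ∈ Icc (0:ℝ) 1 := by
    intro u hu
    obtain ⟨y, hy, rfl⟩ := hFsurj hu
    rw [hsnF y hy]; exact hy
  have hsncont : ∀ u ∈ Ioo 0 (π₀/2), ContinuousAt sn u := by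
    intro u hu
    have humem : sn u ∈ Ioo (0:ℝ) 1 := by
      have := hu
      rw [← himageIoo] at this
      obtain ⟨y, hy, rfl⟩ := this
      rw [hsnF y ⟨hy.1.le, hy.2.le⟩]; exact hy
    exact hsnmono.continuousAt_of_image_mem_nhds
      (Icc_mem_nhds hu.1 hu.2) (by rw [hsnimage]; exact Icc_mem_nhds humem.1 humem.2)
  -- the function g = sn ^ q
  set g : ℝ → ℝ := fun u => sn u ^ q with hgdef
  have hgcont : ContinuousOn g (Ioo 0 (π₀/2)) := by
    intro u hu
    exact ((hsncont u hu).rpow_const (Or.inr hq0.le)).continuousWithinAt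
  have hg1 : IntegrableOn g (Icc 0 (π₀/2)) := by
    rw [integrableOn_Icc_iff_integrableOn_Ioo]
    apply Integrable.mono' (g := fun _ => (1:ℝ))
      ((integrableOn_const_iff (C := (1:ℝ))).mpr (Or.inr measure_Ioo_lt_top))
      (hgcont.aestronglyMeasurable measurableSet_Ioo)
    refine (ae_restrict_iff' measurableSet_Ioo).mpr (ae_of_all _ fun u hu => ?_)
    have hm := hsnmem u ⟨hu.1.le, hu.2.le⟩
    rw [Real.norm_eq_abs, abs_of_nonneg (Real.rpow_nonneg hm.1 _)]
    exact Real.rpow_le_one hm.1 hm.2 hq0.le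
  -- the key integrand on [0,1]
  have hint_ii : IntervalIntegrable (fun y : ℝ => y ^ q * w y) volume 0 1 := by
    apply hwii.mono_fun'
    · exact ((by fun_prop : Measurable fun y : ℝ => y ^ q).mul hwmeas).aestronglyMeasurable
    · rw [uIoc_of_le (by norm_num : (0:ℝ) ≤ 1)]
      refine (ae_restrict_iff' measurableSet_Ioc).mpr (ae_of_all _ fun y hy => ?_)
      have hy' : y ∈ Icc (0:ℝ) 1 := ⟨hy.1.le, hy.2⟩
      have h1 : 0 ≤ w y := aux_w_nonneg hq y hy'
      have h2 : y ^ q ≤ 1 := Real.rpow_le_one hy'.1 hy'.2 hq0.le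
      dsimp only
      rw [Real.norm_eq_abs, abs_of_nonneg (mul_nonneg (Real.rpow_nonneg hy'.1 _) h1)]
      calc y ^ q * w y ≤ 1 * w y := mul_le_mul_of_nonneg_right h2 h1
        _ = w y := one_mul _
  have hint1 : IntegrableOn (fun y : ℝ => y ^ q * w y) (Icc 0 1) :=
    (intervalIntegrable_iff_integrableOn_Icc_of_le (by norm_num)).mp hint_ii
  -- Step 1: substitution x = F y
  have step1 : ∫ y in (0:ℝ)..1, y ^ q * w y = ∫ x in (0:ℝ)..(π₀/2), sn x ^ q := by
    have key := intervalIntegral.integral_comp_mul_deriv''' (a := 0) (b := 1)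
      (f := F) (f' := w) (g := g) ?_ ?_ ?_ ?_ ?_
    · rw [hF0, hF1] at key
      rw [← key]
      apply intervalIntegral.integral_congr
      rw [uIcc_of_le (by norm_num : (0:ℝ) ≤ 1)]
      intro y hy
      simp only [Function.comp_apply, hgdef]
      rw [hsnF y hy]
    · rw [uIcc_of_le (by norm_num : (0:ℝ) ≤ 1)]; exact hFcont
    · simp only [min_eq_left (by norm_num : (0:ℝ) ≤ 1), max_eq_right (by norm_num : (0:ℝ) ≤ 1)]
      intro x hx
      have hcw : ContinuousAt w x := by
        have hb : (0:ℝ) < 1 - x ^ q := by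
          have : x ^ q < 1 := Real.rpow_lt_one hx.1.le hx.2 hq0
          linarith
        have h1 : ContinuousAt (fun t : ℝ => 1 - t ^ q) x :=
          continuousAt_const.sub (Real.continuousAt_rpow_const x q (Or.inl hx.1.ne'))
        exact ContinuousAt.comp (x := x) (g := fun s : ℝ => s ^ (-(1/2:ℝ)))
          (Real.continuousAt_rpow_const _ _ (Or.inl hb.ne')) h1
      exact (intervalIntegral.integral_hasDerivAt_right
        (hwii' 0 (by norm_num) x ⟨hx.1.le, hx.2.le⟩)
        hwmeas.stronglyMeasurable.stronglyMeasurableAtFilter hcw).hasDerivWithinAt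
    · simp only [min_eq_left (by norm_num : (0:ℝ) ≤ 1), max_eq_right (by norm_num : (0:ℝ) ≤ 1)]
      rw [himageIoo]; exact hgcont
    · rw [uIcc_of_le (by norm_num : (0:ℝ) ≤ 1), himageIcc]; exact hg1
    · rw [uIcc_of_le (by norm_num : (0:ℝ) ≤ 1)]
      apply hint1.congr_fun _ measurableSet_Icc
      intro y hy
      simp only [Function.comp_apply, hgdef]
      rw [hsnF y hy]
  -- Step 2: substitution u = y ^ q
  set g2 : ℝ → ℝ := fun u => u ^ q⁻¹ * (1 - u) ^ (-(1/2 : ℝ)) with hg2def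
  have hg2int : IntervalIntegrable g2 volume 0 1 := by
    apply aux_dom_ii.mono_fun'
    · exact (by rw [hg2def]; fun_prop : Measurable g2).aestronglyMeasurable
    · rw [uIoc_of_le (by norm_num : (0:ℝ) ≤ 1)]
      refine (ae_restrict_iff' measurableSet_Ioc).mpr (ae_of_all _ fun u hu => ?_)
      have h0 : (0:ℝ) ≤ 1 - u := by linarith [hu.2]
      have h1 : 0 ≤ (1 - u) ^ (-(1/2:ℝ)) := Real.rpow_nonneg h0 _
      have h2 : u ^ q⁻¹ ≤ 1 := Real.rpow_le_one hu.1.le hu.2 (by positivity)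
      dsimp only
      rw [Real.norm_eq_abs, hg2def,
        abs_of_nonneg (mul_nonneg (Real.rpow_nonneg hu.1.le _) h1)]
      calc u ^ q⁻¹ * (1-u) ^ (-(1/2:ℝ)) ≤ 1 * (1-u) ^ (-(1/2:ℝ)) :=
            mul_le_mul_of_nonneg_right h2 h1
        _ = (1-u) ^ (-(1/2:ℝ)) := one_mul _
  have hcomp2 : ∀ y ∈ Icc (0:ℝ) 1, g2 (y ^ q) * (q * y ^ (q - 1)) = q * (y ^ q * w y) := by
    intro y hy
    have h1 : (y ^ q) ^ q⁻¹ = y := Real.rpow_rpow_inv hy.1 hq0.ne'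
    have h2 : y * y ^ (q - 1) = y ^ q := by
      have hne : (1:ℝ) + (q - 1) ≠ 0 := by intro h; exact hq0.ne' (by linarith)
      calc y * y ^ (q - 1) = y ^ (1:ℝ) * y ^ (q - 1) := by rw [Real.rpow_one]
        _ = y ^ ((1:ℝ) + (q - 1)) := (Real.rpow_add' hy.1 hne).symm
        _ = y ^ q := by norm_num
    simp only [hg2def, hwdef, h1]
    calc y * (1 - y ^ q) ^ (-(1/2:ℝ)) * (q * y ^ (q - 1))
        = q * ((y * y ^ (q - 1)) * (1 - y ^ q) ^ (-(1/2:ℝ))) := by ring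
      _ = q * (y ^ q * (1 - y ^ q) ^ (-(1/2:ℝ))) := by rw [h2]
  have step2 : ∫ u in (0:ℝ)..1, g2 u = q * ∫ y in (0:ℝ)..1, y ^ q * w y := by
    have key := intervalIntegral.integral_comp_mul_deriv''' (a := 0) (b := 1)
      (f := fun y : ℝ => y ^ q) (f' := fun y : ℝ => q * y ^ (q - 1)) (g := g2) ?_ ?_ ?_ ?_ ?_
    · rw [Real.zero_rpow hq0.ne', Real.one_rpow] at key
      rw [← key]
      rw [show (∫ y in (0:ℝ)..1, (g2 ∘ fun y : ℝ => y ^ q) y * (q * y ^ (q - 1)))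
          = ∫ y in (0:ℝ)..1, q * (y ^ q * w y) from by
        apply intervalIntegral.integral_congr
        rw [uIcc_of_le (by norm_num : (0:ℝ) ≤ 1)]
        intro y hy
        exact hcomp2 y hy]
      rw [intervalIntegral.integral_const_mul]
    · intro x _
      exact ((Real.hasDerivAt_rpow_const (p := q) (Or.inr hq.le)).continuousAt).continuousWithinAt
    · simp only [min_eq_left (by norm_num : (0:ℝ) ≤ 1), max_eq_right (by norm_num : (0:ℝ) ≤ 1)]
      intro x _
      exact (Real.hasDerivAt_rpow_const (p := q) (Or.inr hq.le)).hasDerivWithinAt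
    · simp only [min_eq_left (by norm_num : (0:ℝ) ≤ 1), max_eq_right (by norm_num : (0:ℝ) ≤ 1)]
      intro u hu
      obtain ⟨y, hy, rfl⟩ := hu
      have h1 : (0:ℝ) < y ^ q := Real.rpow_pos_of_pos hy.1 q
      have h2 : y ^ q < 1 := Real.rpow_lt_one hy.1.le hy.2 hq0
      apply ContinuousAt.continuousWithinAt
      apply ContinuousAt.mul
      · exact Real.continuousAt_rpow_const _ _ (Or.inl h1.ne')
      · exact ContinuousAt.comp (x := y ^ q) (g := fun s : ℝ => s ^ (-(1/2:ℝ)))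
          (Real.continuousAt_rpow_const _ _ (Or.inl (by linarith : (1:ℝ) - y ^ q ≠ 0)))
          (continuousAt_const.sub continuousAt_id)
    · apply IntegrableOn.mono_set
        ((intervalIntegrable_iff_integrableOn_Icc_of_le (by norm_num)).mp hg2int)
      rintro _ ⟨y, hy, rfl⟩
      rw [uIcc_of_le (by norm_num : (0:ℝ) ≤ 1)] at hy
      exact ⟨Real.rpow_nonneg hy.1 q, Real.rpow_le_one hy.1 hy.2 hq0.le⟩
    · rw [uIcc_of_le (by norm_num : (0:ℝ) ≤ 1)]
      have h5 : IntegrableOn (fun y : ℝ => q * (y ^ q * w y)) (Icc 0 1) :=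
        hint1.const_mul q
      exact IntegrableOn.congr_fun h5 (fun y hy => (hcomp2 y hy).symm) measurableSet_Icc
  -- Step 3: betaFn equals ∫ g2 by reflection
  have step3 : betaFn (1/2) ((q + 1) / q) = ∫ u in (0:ℝ)..1, g2 u := by
    unfold betaFn
    have he : (q + 1) / q - 1 = q⁻¹ := by field_simp; ring
    have he2 : (1/2 : ℝ) - 1 = -(1/2 : ℝ) := by norm_num
    rw [he, he2]
    have hrefl := intervalIntegral.integral_comp_sub_left (a := 0) (b := 1) g2 1
    simp only [sub_zero, sub_self] at hrefl
    rw [← hrefl]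
    apply intervalIntegral.integral_congr
    intro x _
    simp only [hg2def]
    rw [show (1:ℝ) - (1 - x) = x by ring]
    ring
  -- finish
  rw [show (∫ x in (0:ℝ)..(π₀ / 2), sn x ^ q) = ∫ y in (0:ℝ)..1, y ^ q * w y from step1.symm,
    step3, step2]
  field_simp
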